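/- Bound on visitation distribution shift: for any two policies π and π' in a finite discounted MDP, the total variation distance between their normalized discounted state-visitation distributions satisfies D_TV(d^{π'} ‖ d^π) ≤ (γ/(1−γ)) · E_{s ∼ d^π}[D_TV(π'(·|s) ‖ π(·|s))]. -/

import Mathlib

open scoped BigOperators

/-- A fixed point of the discounted visitation operator is nonnegative. -/
lemma visitation_nonneg {S : Type*} [Fintype S]
    (γ : ℝ) (hγ0 : 0 ≤ γ) (hγ1 : γ < 1)
    (ρ : S → ℝ) (hρ : ∀ s, 0 ≤ ρ s)
    (K : S → S → ℝ) (hK : ∀ s'' s, 0 ≤ K s'' s)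
    (hK1 : ∀ s'', ∑ s, K s'' s = 1)
    (d : S → ℝ)
    (hd : ∀ s, d s = (1 - γ) * ρ s + γ * ∑ s'', d s'' * K s'' s) :
    ∀ s, 0 ≤ d s := by
  by_contra h
  push_neg at h
  obtain ⟨s0, hs0⟩ := h
  set N := Finset.univ.filter (fun s => d s < 0) with hN
  have hmemN : ∀ s, s ∈ N ↔ d s < 0 := by intro s; simp [hN]
  have hs0N : s0 ∈ N := (hmemN s0).2 hs0
  have hTneg : ∑ s ∈ N, d s < 0 :=
    Finset.sum_neg (fun s hs => (hmemN s).1 hs) ⟨s0, hs0N⟩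
  -- rewrite the sum over N using the fixed point equation
  have hT : ∑ s ∈ N, d s
      = (1 - γ) * ∑ s ∈ N, ρ s + γ * ∑ s'', d s'' * ∑ s ∈ N, K s'' s := by
    calc ∑ s ∈ N, d s
        = ∑ s ∈ N, ((1 - γ) * ρ s + γ * ∑ s'', d s'' * K s'' s) := by
          exact Finset.sum_congr rfl (fun s _ => hd s)
      _ = (1 - γ) * ∑ s ∈ N, ρ s + γ * ∑ s ∈ N, ∑ s'', d s'' * K s'' s := by
          rw [Finset.sum_add_distrib, Finset.mul_sum, Finset.mul_sum]
      _ = (1 - γ) * ∑ s ∈ N, ρ s + γ * ∑ s'', d s'' * ∑ s ∈ N, K s'' s := by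
          rw [Finset.sum_comm]
          congr 2
          exact Finset.sum_congr rfl (fun s'' _ => (Finset.mul_sum _ _ _).symm)
  have hcle : ∀ s'', ∑ s ∈ N, K s'' s ≤ 1 := by
    intro s''
    rw [← hK1 s'']
    exact Finset.sum_le_sum_of_subset_of_nonneg (Finset.subset_univ N)
      (fun s _ _ => hK s'' s)
  have hcnn : ∀ s'', 0 ≤ ∑ s ∈ N, K s'' s :=
    fun s'' => Finset.sum_nonneg (fun s _ => hK s'' s)
  have hbound : ∑ s ∈ N, d s ≤ ∑ s'', d s'' * ∑ s ∈ N, K s'' s := by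
    have h1 : ∑ s'' ∈ N, d s'' * ∑ s ∈ N, K s'' s
        ≤ ∑ s'' ∈ Finset.univ, d s'' * ∑ s ∈ N, K s'' s := by
      apply Finset.sum_le_sum_of_subset_of_nonneg (Finset.subset_univ N)
      intro s'' _ hs''
      have : 0 ≤ d s'' := by
        by_contra hlt
        exact hs'' ((hmemN s'').2 (lt_of_not_ge hlt))
      exact mul_nonneg this (hcnn s'')
    have h2 : ∑ s'' ∈ N, d s'' ≤ ∑ s'' ∈ N, d s'' * ∑ s ∈ N, K s'' s := by
      apply Finset.sum_le_sum
      intro s'' hs''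
      have hdneg : d s'' ≤ 0 := le_of_lt ((hmemN s'').1 hs'')
      calc d s'' = d s'' * 1 := (mul_one _).symm
        _ ≤ d s'' * ∑ s ∈ N, K s'' s :=
          mul_le_mul_of_nonpos_left (hcle s'') hdneg
    exact le_trans h2 h1
  have hρN : 0 ≤ ∑ s ∈ N, ρ s := Finset.sum_nonneg (fun s _ => hρ s)
  nlinarith [hTneg, hT, hbound, hρN]

/-- Bound on visitation distribution shift: the TV distance between the discounted
visitation distributions of two policies is bounded by γ/(1−γ) times the average statewise
TV distance between the policies under the visitation distribution of the first policy. -/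
theorem visitation_shift_bound
    {S A : Type*} [Fintype S] [Fintype A]
    (γ : ℝ) (hγ0 : 0 ≤ γ) (hγ1 : γ < 1)
    (P : S → A → S → ℝ) (hPnn : ∀ s a s', 0 ≤ P s a s')
    (hP1 : ∀ s a, ∑ s', P s a s' = 1)
    (ρ : S → ℝ) (hρnn : ∀ s, 0 ≤ ρ s) (hρ1 : ∑ s, ρ s = 1)
    (π π' : S → A → ℝ)
    (hπnn : ∀ s a, 0 ≤ π s a) (hπ1 : ∀ s, ∑ a, π s a = 1)
    (hπ'nn : ∀ s a, 0 ≤ π' s a) (hπ'1 : ∀ s, ∑ a, π' s a = 1)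
    (dvis dvis' : S → ℝ)
    (hd : ∀ s, dvis s = (1 - γ) * ρ s + γ * ∑ s'', ∑ a, dvis s'' * π s'' a * P s'' a s)
    (hd' : ∀ s, dvis' s = (1 - γ) * ρ s + γ * ∑ s'', ∑ a, dvis' s'' * π' s'' a * P s'' a s) :
    (1 / 2) * ∑ s, |dvis' s - dvis s|
      ≤ (γ / (1 - γ)) * ∑ s, dvis s * ((1 / 2) * ∑ a, |π' s a - π s a|) := by
  have hγpos : (0:ℝ) < 1 - γ := by linarith
  -- dvis is nonnegative
  have hdnn : ∀ s, 0 ≤ dvis s := by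
    apply visitation_nonneg γ hγ0 hγ1 ρ hρnn (fun s'' s => ∑ a, π s'' a * P s'' a s)
    · intro s'' s
      exact Finset.sum_nonneg (fun a _ => mul_nonneg (hπnn s'' a) (hPnn s'' a s))
    · intro s''
      rw [Finset.sum_comm]
      calc ∑ a, ∑ s, π s'' a * P s'' a s
          = ∑ a, π s'' a * ∑ s, P s'' a s := by
            exact Finset.sum_congr rfl (fun a _ => (Finset.mul_sum _ _ _).symm)
        _ = 1 := by simp [hP1, hπ1]
    · intro s
      rw [hd s]
      congr 2
      apply Finset.sum_congr rfl
      intro s'' _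
      rw [Finset.mul_sum]
      exact Finset.sum_congr rfl (fun a _ => by ring)
  set L := ∑ s, |dvis' s - dvis s| with hL
  set B := ∑ s, dvis s * ∑ a, |π' s a - π s a| with hB
  have hLnn : 0 ≤ L := Finset.sum_nonneg (fun s _ => abs_nonneg _)
  -- key inequality: (1-γ) L ≤ γ B, i.e. L ≤ γ L + γ B
  have hkey : L ≤ γ * L + γ * B := by
    have step1 : ∀ s, dvis' s - dvis s
        = γ * ∑ s'', ∑ a, (dvis' s'' * π' s'' a - dvis s'' * π s'' a) * P s'' a s := by
      intro s
      rw [hd' s, hd s]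
      have : ∀ (f g : S → A → ℝ),
          γ * (∑ s'' : S, ∑ a : A, f s'' a) - γ * (∑ s'' : S, ∑ a : A, g s'' a)
          = γ * ∑ s'' : S, ∑ a : A, (f s'' a - g s'' a) := by
        intro f g
        rw [← mul_sub, ← Finset.sum_sub_distrib]
        congr 1
        exact Finset.sum_congr rfl (fun s'' _ => (Finset.sum_sub_distrib _ _).symm)
      calc (1 - γ) * ρ s + γ * ∑ s'' : S, ∑ a : A, dvis' s'' * π' s'' a * P s'' a s
            - ((1 - γ) * ρ s + γ * ∑ s'' : S, ∑ a : A, dvis s'' * π s'' a * P s'' a s)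
          = γ * (∑ s'' : S, ∑ a : A, dvis' s'' * π' s'' a * P s'' a s)
            - γ * (∑ s'' : S, ∑ a : A, dvis s'' * π s'' a * P s'' a s) := by ring
        _ = γ * ∑ s'' : S, ∑ a : A,
              (dvis' s'' * π' s'' a * P s'' a s - dvis s'' * π s'' a * P s'' a s) :=
            this _ _
        _ = γ * ∑ s'' : S, ∑ a : A, (dvis' s'' * π' s'' a - dvis s'' * π s'' a) * P s'' a s := by
            congr 1
            exact Finset.sum_congr rfl (fun s'' _ =>
              Finset.sum_congr rfl (fun a _ => by ring))
    -- step 2: L ≤ γ * ∑ s'' ∑ a |dvis' π' - dvis π|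
    have step2 : L ≤ γ * ∑ s'', ∑ a, |dvis' s'' * π' s'' a - dvis s'' * π s'' a| := by
      rw [hL]
      calc ∑ s, |dvis' s - dvis s|
          = ∑ s, γ * |∑ s'', ∑ a, (dvis' s'' * π' s'' a - dvis s'' * π s'' a) * P s'' a s| := by
            apply Finset.sum_congr rfl
            intro s _
            rw [step1 s, abs_mul, abs_of_nonneg hγ0]
        _ ≤ ∑ s, γ * ∑ s'', ∑ a,
              |dvis' s'' * π' s'' a - dvis s'' * π s'' a| * P s'' a s := by
            apply Finset.sum_le_sum
            intro s _
            apply mul_le_mul_of_nonneg_left _ hγ0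
            calc |∑ s'', ∑ a, (dvis' s'' * π' s'' a - dvis s'' * π s'' a) * P s'' a s|
                ≤ ∑ s'', |∑ a, (dvis' s'' * π' s'' a - dvis s'' * π s'' a) * P s'' a s| :=
                  Finset.abs_sum_le_sum_abs _ _
              _ ≤ ∑ s'', ∑ a, |dvis' s'' * π' s'' a - dvis s'' * π s'' a| * P s'' a s := by
                  apply Finset.sum_le_sum
                  intro s'' _
                  calc |∑ a, (dvis' s'' * π' s'' a - dvis s'' * π s'' a) * P s'' a s|
                      ≤ ∑ a, |(dvis' s'' * π' s'' a - dvis s'' * π s'' a) * P s'' a s| :=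
                        Finset.abs_sum_le_sum_abs _ _
                    _ = ∑ a, |dvis' s'' * π' s'' a - dvis s'' * π s'' a| * P s'' a s := by
                        apply Finset.sum_congr rfl
                        intro a _
                        rw [abs_mul, abs_of_nonneg (hPnn s'' a s)]
        _ = γ * ∑ s'', ∑ a, |dvis' s'' * π' s'' a - dvis s'' * π s'' a| := by
            rw [← Finset.mul_sum]
            congr 1
            rw [Finset.sum_comm]
            apply Finset.sum_congr rfl
            intro s'' _
            rw [Finset.sum_comm]
            apply Finset.sum_congr rfl
            intro a _
            rw [← Finset.mul_sum, hP1 s'' a, mul_one]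
    -- step 3: pointwise bound on the inner term
    have step3 : ∑ s'', ∑ a, |dvis' s'' * π' s'' a - dvis s'' * π s'' a| ≤ L + B := by
      rw [hL, hB, ← Finset.sum_add_distrib]
      apply Finset.sum_le_sum
      intro s'' _
      calc ∑ a, |dvis' s'' * π' s'' a - dvis s'' * π s'' a|
          ≤ ∑ a, (|dvis' s'' - dvis s''| * π' s'' a + dvis s'' * |π' s'' a - π s'' a|) := by
            apply Finset.sum_le_sum
            intro a _
            have : dvis' s'' * π' s'' a - dvis s'' * π s'' a
                = (dvis' s'' - dvis s'') * π' s'' a + dvis s'' * (π' s'' a - π s'' a) := by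
              ring
            rw [this]
            calc |(dvis' s'' - dvis s'') * π' s'' a + dvis s'' * (π' s'' a - π s'' a)|
                ≤ |(dvis' s'' - dvis s'') * π' s'' a| + |dvis s'' * (π' s'' a - π s'' a)| :=
                  abs_add_le _ _
              _ = |dvis' s'' - dvis s''| * π' s'' a + dvis s'' * |π' s'' a - π s'' a| := by
                  rw [abs_mul, abs_mul, abs_of_nonneg (hπ'nn s'' a),
                    abs_of_nonneg (hdnn s'')]
        _ = |dvis' s'' - dvis s''| + dvis s'' * ∑ a, |π' s'' a - π s'' a| := by
            rw [Finset.sum_add_distrib, ← Finset.mul_sum, ← Finset.mul_sum, hπ'1 s'', mul_one]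
    have := mul_le_mul_of_nonneg_left step3 hγ0
    linarith [step2, this]
  -- conclude
  have hfinal : (1 - γ) * L ≤ γ * B := by linarith
  have hRHS : ∑ s, dvis s * ((1 / 2) * ∑ a, |π' s a - π s a|) = (1 / 2) * B := by
    rw [hB, Finset.mul_sum]
    exact Finset.sum_congr rfl (fun s _ => by ring)
  rw [hRHS]
  have h2 : (0:ℝ) < 2 * (1 - γ) := by linarith
  have hne : (1 - γ) ≠ 0 := ne_of_gt hγpos
  rw [show γ / (1 - γ) * (1 / 2 * B) = γ * B / (2 * (1 - γ)) by field_simp]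
  rw [le_div_iff₀ h2]
  nlinarith [hfinal, hLnn]
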